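/- Let K ⊆ ℝ be compact and well-ordered by the reverse usual order ≼ with order type ω^ω + 1, and let K[α] denote its α-th element. Then for every n ≥ 1 and every ordinal α ≤ ω^ω (where defined), K^(n)[α] = K[ω^n·(1+α)], i.e., the n-th derived set consists exactly of the elements of K indexed by ordinals of the form ω^n·(1+α). -/

import Mathlib

open Ordinal Filter Topology Set

/-- The `n`-th derived set of `A ⊆ ℝ`. -/
noncomputable def iterDeriv (A : Set ℝ) (n : ℕ) : Set ℝ := (derivedSet (X := ℝ))^[n] A

/-- The ordinal `ω ^ ω`. -/
noncomputable def wOmega : Ordinal.{0} := Ordinal.omega0 ^ Ordinal.omega0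

/-- An enumeration of `K ⊆ ℝ` witnessing that `K`, with the reverse of the usual order,
is well-ordered with order type `ω ^ ω + 1`: its elements are exactly `e α` for
`α ≤ ω ^ ω`, and the enumeration is strictly order-reversing. `e α` is the element
written `K[α]`. -/
structure OrdEnum (K : Set ℝ) where
  e : Ordinal.{0} → ℝ
  mem : ∀ α ≤ wOmega, e α ∈ K
  surj : ∀ x ∈ K, ∃ α ≤ wOmega, e α = x
  anti : ∀ ⦃α β : Ordinal.{0}⦄, α ≤ wOmega → β ≤ wOmega → (α < β ↔ e β < e α)

/-- An enumeration of a set `S ⊆ ℝ` of reverse-order type `ω ^ ω` (indices `α < ω ^ ω`),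
strictly order-reversing; `e α` is the element written `S[α]`. -/
structure SubEnum (S : Set ℝ) where
  e : Ordinal.{0} → ℝ
  mem : ∀ α < wOmega, e α ∈ S
  surj : ∀ x ∈ S, ∃ α < wOmega, e α = x
  anti : ∀ ⦃α β : Ordinal.{0}⦄, α < wOmega → β < wOmega → (α < β ↔ e β < e α)

/-- A self-similar compact set of ratio `ρ > 1` and module `μ ≥ 1`:
a compact `K ⊆ [0, ∞)`, well-ordered by the reverse usual order with order
type `ω ^ ω + 1`, satisfying `ρ • K^(μ) = K`. -/
def SelfSimilar (K : Set ℝ) (ρ : ℝ) (μ : ℕ) : Prop :=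
  IsCompact K ∧ K ⊆ Set.Ici 0 ∧ 1 < ρ ∧ 1 ≤ μ ∧
    (fun x => ρ * x) '' iterDeriv K μ = K ∧ Nonempty (OrdEnum K)

/-! ### Auxiliary lemmas -/

lemma omega0_le_wOmega : Ordinal.omega0 ≤ wOmega := by
  calc Ordinal.omega0 = Ordinal.omega0 ^ (1 : Ordinal) := (opow_one _).symm
    _ ≤ Ordinal.omega0 ^ Ordinal.omega0 :=
        opow_le_opow_right omega0_pos one_lt_omega0.le

lemma omega0_mul_wOmega : Ordinal.omega0 * wOmega = wOmega := by
  rw [wOmega, ← opow_one_add, one_add_omega0]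

lemma wOmega_isLimit : Order.IsSuccLimit wOmega :=
  isSuccLimit_opow one_lt_omega0 isSuccLimit_omega0

lemma OrdEnum.le_iff {K : Set ℝ} (E : OrdEnum K) {α β : Ordinal.{0}}
    (hα : α ≤ wOmega) (hβ : β ≤ wOmega) : α ≤ β ↔ E.e β ≤ E.e α := by
  rw [← not_lt, ← not_lt, E.anti hβ hα]

/-- At a limit index, the enumeration value is approached from above by earlier values. -/
lemma OrdEnum.key_inf {K : Set ℝ} (hK : IsCompact K) (E : OrdEnum K) {β : Ordinal.{0}}
    (hβ : β ≤ wOmega) (hlim : Order.IsSuccLimit β) {ε : ℝ} (hε : 0 < ε) :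
    ∃ γ < β, E.e γ < E.e β + ε := by
  set S : Set ℝ := E.e '' Set.Iio β with hS
  have hSne : S.Nonempty := ⟨E.e 0, ⟨0, hlim.pos, rfl⟩⟩
  have hSK : S ⊆ K := by
    rintro _ ⟨γ, hγ, rfl⟩
    exact E.mem γ ((le_of_lt hγ).trans hβ)
  have hSbdd : BddBelow S := hK.bddBelow.mono hSK
  have hsc : sInf S ∈ K :=
    hK.isClosed.closure_subset ((closure_mono hSK) (csInf_mem_closure hSne hSbdd))
  obtain ⟨η, hη, hηe⟩ := E.surj _ hsc
  have hβη : β ≤ η := by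
    by_contra h
    push_neg at h
    have h1 : η + 1 < β := by
      have := hlim.succ_lt h
      rwa [← add_one_eq_succ] at this
    have h1' : η + 1 ≤ wOmega := h1.le.trans hβ
    have hle : sInf S ≤ E.e (η + 1) := csInf_le hSbdd ⟨η + 1, h1, rfl⟩
    rw [← hηe] at hle
    have : E.e (η + 1) < E.e η := (E.anti hη h1').mp (lt_add_one η)
    exact absurd hle (not_le.mpr this)
  have hsle : sInf S ≤ E.e β := by
    rw [← hηe]
    exact (E.le_iff hβ hη).mp hβη
  obtain ⟨y, ⟨γ, hγ, rfl⟩, hy⟩ :=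
    exists_lt_of_csInf_lt hSne (lt_of_le_of_lt hsle (lt_add_of_pos_right _ hε))
  exact ⟨γ, hγ, hy⟩

/-- The derived set of `K` consists exactly of the values at limit indices,
i.e. at indices of the form `ω * (1 + α)`. -/
lemma derivedSet_ordEnum (K : Set ℝ) (hK : IsCompact K) (E : OrdEnum K) :
    derivedSet K = {x | ∃ α : Ordinal.{0}, Ordinal.omega0 * (1 + α) ≤ wOmega ∧
      E.e (Ordinal.omega0 * (1 + α)) = x} := by
  ext x
  constructor
  · intro hx
    have hxK : x ∈ K := by
      have := derivedSet_subset_closure K hx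
      rwa [hK.isClosed.closure_eq] at this
    obtain ⟨β, hβ, rfl⟩ := E.surj x hxK
    rw [mem_derivedSet, accPt_iff_nhds] at hx
    have hlim : Order.IsSuccLimit β := by
      rcases Ordinal.zero_or_succ_or_isSuccLimit β with h0 | ⟨γ, hγ⟩ | hl
      · -- β = 0 : E.e 0 is the maximum, isolated from below
        exfalso
        subst h0
        have h1 : (1 : Ordinal) ≤ wOmega := one_lt_omega0.le.trans omega0_le_wOmega
        have h10 : E.e 1 < E.e 0 := (E.anti hβ h1).mp zero_lt_one
        obtain ⟨y, ⟨hyB, hyK⟩, hyne⟩ :=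
          hx (Metric.ball (E.e 0) (E.e 0 - E.e 1)) (Metric.ball_mem_nhds _ (by linarith))
        obtain ⟨δ, hδ, rfl⟩ := E.surj y hyK
        have hδ1 : (1 : Ordinal) ≤ δ :=
          Ordinal.one_le_iff_ne_zero.mpr (fun h => hyne (by rw [h]))
        have : E.e δ ≤ E.e 1 := (E.le_iff h1 hδ).mp hδ1
        rw [Metric.mem_ball, Real.dist_eq, abs_lt] at hyB
        linarith [hyB.1]
      · -- β = γ + 1 : isolated between E.e (β + 1) and E.e γ
        exfalso
        rw [← add_one_eq_succ] at hγ
        subst hγ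
        have hβlt : γ + 1 < wOmega := by
          rcases lt_or_eq_of_le hβ with h | h
          · exact h
          · exfalso
            have hγlt : γ < wOmega := by rw [← h]; exact lt_add_one γ
            have h2 := wOmega_isLimit.succ_lt hγlt
            rw [← add_one_eq_succ, h] at h2
            exact h2.false
        have hγle : γ ≤ wOmega := ((lt_add_one γ).trans_le hβ).le
        have hβ1 : γ + 1 + 1 ≤ wOmega := by
          have := wOmega_isLimit.succ_lt hβlt
          rw [← add_one_eq_succ] at this
          exact this.le
        have hup : E.e (γ + 1) < E.e γ := (E.anti hγle hβ).mp (lt_add_one γ)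
        have hdown : E.e (γ + 1 + 1) < E.e (γ + 1) := (E.anti hβ hβ1).mp (lt_add_one _)
        set ε : ℝ := min (E.e γ - E.e (γ + 1)) (E.e (γ + 1) - E.e (γ + 1 + 1)) with hε
        have hεpos : 0 < ε := lt_min (by linarith) (by linarith)
        obtain ⟨y, ⟨hyB, hyK⟩, hyne⟩ :=
          hx (Metric.ball (E.e (γ + 1)) ε) (Metric.ball_mem_nhds _ hεpos)
        obtain ⟨δ, hδ, rfl⟩ := E.surj y hyK
        rw [Metric.mem_ball, Real.dist_eq, abs_lt] at hyB
        have hδne : δ ≠ γ + 1 := fun h => hyne (by rw [h])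
        rcases lt_or_gt_of_ne hδne with h | h
        · have hδγ : δ ≤ γ := by
            rw [Ordinal.add_one_eq_succ, Order.lt_succ_iff] at h
            exact h
          have : E.e γ ≤ E.e δ := (E.le_iff hδ hγle).mp hδγ
          have hεle : ε ≤ E.e γ - E.e (γ + 1) := min_le_left _ _
          linarith [hyB.2]
        · have hδγ : γ + 1 + 1 ≤ δ := by
            rw [add_one_eq_succ, Order.succ_le_iff]
            exact h
          have : E.e δ ≤ E.e (γ + 1 + 1) := (E.le_iff hβ1 hδ).mp hδγ
          have hεle : ε ≤ E.e (γ + 1) - E.e (γ + 1 + 1) := min_le_right _ _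
          linarith [hyB.1]
      · exact hl
    obtain ⟨hne, c, hc⟩ := isSuccLimit_iff_omega0_dvd.mp hlim
    have hcne : c ≠ 0 := by
      rintro rfl
      rw [mul_zero] at hc
      exact hne hc
    refine ⟨c - 1, ?_, ?_⟩
    · rwa [Ordinal.add_sub_cancel_of_le (Ordinal.one_le_iff_ne_zero.mpr hcne), ← hc]
    · rw [Ordinal.add_sub_cancel_of_le (Ordinal.one_le_iff_ne_zero.mpr hcne), ← hc]
  · rintro ⟨α, hle, rfl⟩
    set β : Ordinal.{0} := Ordinal.omega0 * (1 + α) with hβdef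
    have hpos : (0 : Ordinal) < 1 + α := lt_of_lt_of_le zero_lt_one le_self_add
    have hlim : Order.IsSuccLimit β := isSuccLimit_mul_left isSuccLimit_omega0 hpos
    rw [mem_derivedSet, accPt_iff_nhds]
    intro U hU
    obtain ⟨ε, hεpos, hεU⟩ := Metric.mem_nhds_iff.mp hU
    obtain ⟨γ, hγ, hγlt⟩ := E.key_inf hK hle hlim hεpos
    have hγle : γ ≤ wOmega := hγ.le.trans hle
    have hgt : E.e β < E.e γ := (E.anti hγle hle).mp hγ
    refine ⟨E.e γ, ⟨hεU ?_, E.mem γ hγle⟩, ne_of_gt hgt⟩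
    rw [Metric.mem_ball, Real.dist_eq, abs_lt]
    constructor <;> linarith

/-- The derived set of a compact reverse-well-ordered set of type `ω^ω + 1` again has
reverse order type `ω^ω + 1`, enumerated by `α ↦ K[ω * (1 + α)]`. -/
noncomputable def OrdEnum.deriv {K : Set ℝ} (hK : IsCompact K) (E : OrdEnum K) :
    OrdEnum (derivedSet K) where
  e α := E.e (Ordinal.omega0 * (1 + α))
  mem α hα := by
    rw [derivedSet_ordEnum K hK E]
    refine ⟨α, ?_, rfl⟩
    calc Ordinal.omega0 * (1 + α) ≤ Ordinal.omega0 * (1 + wOmega) := by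
          exact mul_le_mul_right (add_le_add_right hα 1) _
      _ = wOmega := by rw [one_add_of_omega0_le omega0_le_wOmega, omega0_mul_wOmega]
  surj x hx := by
    rw [derivedSet_ordEnum K hK E] at hx
    obtain ⟨α, hle, he⟩ := hx
    refine ⟨α, ?_, he⟩
    calc α ≤ 1 + α := le_add_self
      _ = 1 * (1 + α) := (one_mul _).symm
      _ ≤ Ordinal.omega0 * (1 + α) := mul_le_mul_left one_lt_omega0.le _
      _ ≤ wOmega := hle
  anti α β hα hβ := by
    have bound : ∀ γ : Ordinal.{0}, γ ≤ wOmega → Ordinal.omega0 * (1 + γ) ≤ wOmega := by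
      intro γ hγ
      calc Ordinal.omega0 * (1 + γ) ≤ Ordinal.omega0 * (1 + wOmega) :=
            mul_le_mul_right (add_le_add_right hγ 1) _
        _ = wOmega := by rw [one_add_of_omega0_le omega0_le_wOmega, omega0_mul_wOmega]
    rw [← E.anti (bound α hα) (bound β hβ), mul_lt_mul_iff_right₀ omega0_pos,
      add_lt_add_iff_left]

lemma reindex (n : ℕ) (hn : 1 ≤ n) (α : Ordinal.{0}) :
    Ordinal.omega0 * (1 + Ordinal.omega0 ^ (n : Ordinal) * (1 + α)) =
      Ordinal.omega0 ^ ((n + 1 : ℕ) : Ordinal) * (1 + α) := by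
  have h1 : Ordinal.omega0 ≤ Ordinal.omega0 ^ (n : Ordinal) * (1 + α) := by
    calc Ordinal.omega0 = Ordinal.omega0 ^ (1 : Ordinal) := (opow_one _).symm
      _ ≤ Ordinal.omega0 ^ (n : Ordinal) := opow_le_opow_right omega0_pos (by
          exact_mod_cast Nat.one_le_cast.mpr hn)
      _ = Ordinal.omega0 ^ (n : Ordinal) * 1 := (mul_one _).symm
      _ ≤ Ordinal.omega0 ^ (n : Ordinal) * (1 + α) :=
          mul_le_mul_right le_self_add _
  rw [one_add_of_omega0_le h1, ← mul_assoc, ← opow_one_add, Ordinal.one_add_natCast]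
  norm_cast

theorem iterDeriv_eq_image_limit_ordinals (K : Set ℝ) (hK : IsCompact K) (E : OrdEnum K)
    (n : ℕ) (hn : 1 ≤ n) :
    iterDeriv K n =
      {x | ∃ α : Ordinal.{0}, Ordinal.omega0 ^ (n : Ordinal) * (1 + α) ≤ wOmega ∧
        E.e (Ordinal.omega0 ^ (n : Ordinal) * (1 + α)) = x} := by
  induction n, hn using Nat.le_induction generalizing K E with
  | base =>
    simp only [iterDeriv, Function.iterate_one, Nat.cast_one, opow_one]
    exact derivedSet_ordEnum K hK E
  | succ n hn ih =>
    have hsub : derivedSet K ⊆ K := by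
      have := derivedSet_subset_closure K
      rwa [hK.isClosed.closure_eq] at this
    have hKc : IsCompact (derivedSet K) :=
      hK.of_isClosed_subset (isClosed_derivedSet K) hsub
    have hd : iterDeriv K (n + 1) = iterDeriv (derivedSet K) n := by
      simp [iterDeriv, Function.iterate_succ_apply]
    rw [hd, ih (derivedSet K) hKc (E.deriv hK)]
    ext x
    simp only [Set.mem_setOf_eq, OrdEnum.deriv]
    constructor
    · rintro ⟨α, hle, he⟩
      refine ⟨α, ?_, ?_⟩
      · rw [← reindex n hn α, ← omega0_mul_wOmega]
        have h1 : 1 + Ordinal.omega0 ^ (n : Ordinal) * (1 + α) ≤ wOmega := by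
          rw [one_add_of_omega0_le]
          · exact hle
          · calc Ordinal.omega0 = Ordinal.omega0 ^ (1 : Ordinal) := (opow_one _).symm
              _ ≤ Ordinal.omega0 ^ (n : Ordinal) :=
                  opow_le_opow_right omega0_pos (by exact_mod_cast Nat.one_le_cast.mpr hn)
              _ = Ordinal.omega0 ^ (n : Ordinal) * 1 := (mul_one _).symm
              _ ≤ Ordinal.omega0 ^ (n : Ordinal) * (1 + α) :=
                  mul_le_mul_right le_self_add _
        exact mul_le_mul_right h1 _
      · rw [← he, reindex n hn α]
    · rintro ⟨α, hle, he⟩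
      refine ⟨α, ?_, ?_⟩
      · rw [← reindex n hn α] at hle
        rw [← omega0_mul_wOmega] at hle
        have := (mul_le_mul_iff_right₀ omega0_pos).mp hle
        calc Ordinal.omega0 ^ (n : Ordinal) * (1 + α)
            ≤ 1 + Ordinal.omega0 ^ (n : Ordinal) * (1 + α) := le_add_self
          _ ≤ wOmega := this
      · rw [reindex n hn α]
        exact he
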